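/- For all 0<q<1, the series Σ_{k=0}^{∞} (λ_k(q) − κ(q)) converges, and the sequence of offsets b_n(q) converges as n→∞ with limit b(q) = 2·κ(q)·Σ_{k=0}^{∞} (λ_k(q) − κ(q)). Moreover this limit b(q) is strictly positive. -/

import Mathlib

/-- Partial product of the Euler function: `λ_k(q) = ∏_{i=1}^k (1 - q^i)`, with `λ_0(q) = 1`. -/
noncomputable def eulerLam (q : ℝ) (k : ℕ) : ℝ := ∏ i ∈ Finset.range k, (1 - q ^ (i + 1))

/-- The Euler function `κ(q) = ∏_{i=1}^∞ (1 - q^i)`. -/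
noncomputable def eulerKappa (q : ℝ) : ℝ := ∏' i : ℕ, (1 - q ^ (i + 1))

/-- The tail product `μ_n(q) = ∏_{i=n}^∞ (1 - q^i)`. -/
noncomputable def eulerMu (q : ℝ) (n : ℕ) : ℝ := ∏' i : ℕ, (1 - q ^ (n + i))

/-- The offset `b_n(q) = Σ_{k=1}^n λ_{k-1}(q) λ_{n-k}(q) - n κ(q)²`, the expected number of
posts in a random graph order on `n` elements minus `n κ(q)²`. -/
noncomputable def postOffset (q : ℝ) (n : ℕ) : ℝ :=
  (∑ k ∈ Finset.Icc 1 n, eulerLam q (k - 1) * eulerLam q (n - k)) - n * eulerKappa q ^ 2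

section Aux

variable {q : ℝ}

lemma euler_factor_pos (hq0 : 0 < q) (hq1 : q < 1) (i : ℕ) : 0 < 1 - q ^ (i + 1) :=
  sub_pos.2 (pow_lt_one₀ hq0.le hq1 (Nat.succ_ne_zero i))

lemma eulerLam_pos (hq0 : 0 < q) (hq1 : q < 1) (k : ℕ) : 0 < eulerLam q k :=
  Finset.prod_pos fun i _ => euler_factor_pos hq0 hq1 i

lemma eulerLam_le_one (hq0 : 0 < q) (hq1 : q < 1) (k : ℕ) : eulerLam q k ≤ 1 :=
  Finset.prod_le_one (fun i _ => (euler_factor_pos hq0 hq1 i).le)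
    (fun i _ => by nlinarith [pow_pos hq0 (i + 1)])

lemma eulerLam_succ (k : ℕ) :
    eulerLam q (k + 1) = eulerLam q k * (1 - q ^ (k + 1)) :=
  Finset.prod_range_succ _ _

lemma eulerLam_antitone (hq0 : 0 < q) (hq1 : q < 1) : Antitone (eulerLam q) := by
  apply antitone_nat_of_succ_le
  intro n
  rw [eulerLam_succ]
  have h1 := eulerLam_pos hq0 hq1 n
  have h2 := pow_pos hq0 (n + 1)
  nlinarith

lemma summable_log_euler (hq0 : 0 < q) (hq1 : q < 1) :
    Summable fun i : ℕ => Real.log (1 - q ^ (i + 1)) := by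
  have hgeo : Summable fun i : ℕ => q / (1 - q) * q ^ i :=
    (summable_geometric_of_lt_one hq0.le hq1).mul_left _
  rw [← summable_abs_iff]
  apply hgeo.of_nonneg_of_le (fun i => abs_nonneg _)
  intro i
  have hfp := euler_factor_pos hq0 hq1 i
  have hle : q ^ (i + 1) ≤ q := by
    calc q ^ (i + 1) ≤ q ^ 1 := pow_le_pow_of_le_one hq0.le hq1.le (by omega)
    _ = q := pow_one q
  have hlog : Real.log (1 - q ^ (i + 1)) ≤ 0 :=
    Real.log_nonpos (by positivity) (by nlinarith [pow_pos hq0 (i + 1)])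
  rw [abs_of_nonpos hlog, ← Real.log_inv]
  have := Real.log_le_sub_one_of_pos (x := (1 - q ^ (i + 1))⁻¹) (by positivity)
  have hinv : (1 - q ^ (i + 1))⁻¹ - 1 = q ^ (i + 1) / (1 - q ^ (i + 1)) := by
    field_simp
    ring
  rw [hinv] at this
  refine this.trans ?_
  have hq1q : (0:ℝ) < 1 - q := by linarith
  calc q ^ (i + 1) / (1 - q ^ (i + 1)) ≤ q ^ (i + 1) / (1 - q) := by
        apply div_le_div_of_nonneg_left (by positivity) hq1q (by linarith)
    _ = q / (1 - q) * q ^ i := by rw [pow_succ]; ring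

lemma hasProd_euler (hq0 : 0 < q) (hq1 : q < 1) :
    HasProd (fun i : ℕ => 1 - q ^ (i + 1))
      (Real.exp (∑' i : ℕ, Real.log (1 - q ^ (i + 1)))) := by
  have h := (summable_log_euler hq0 hq1).hasSum.rexp
  have heq : (Real.exp ∘ fun i : ℕ => Real.log (1 - q ^ (i + 1))) =
      fun i : ℕ => 1 - q ^ (i + 1) := by
    funext i
    exact Real.exp_log (euler_factor_pos hq0 hq1 i)
  rwa [heq] at h

lemma eulerKappa_eq_exp (hq0 : 0 < q) (hq1 : q < 1) :
    eulerKappa q = Real.exp (∑' i : ℕ, Real.log (1 - q ^ (i + 1))) :=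
  (hasProd_euler hq0 hq1).tprod_eq

lemma eulerKappa_pos (hq0 : 0 < q) (hq1 : q < 1) : 0 < eulerKappa q := by
  rw [eulerKappa_eq_exp hq0 hq1]; exact Real.exp_pos _

lemma tendsto_eulerLam (hq0 : 0 < q) (hq1 : q < 1) :
    Filter.Tendsto (eulerLam q) Filter.atTop (nhds (eulerKappa q)) := by
  have h := (hasProd_euler hq0 hq1).tendsto_prod_nat
  rw [← eulerKappa_eq_exp hq0 hq1] at h
  exact h

lemma eulerKappa_le_eulerLam (hq0 : 0 < q) (hq1 : q < 1) (k : ℕ) :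
    eulerKappa q ≤ eulerLam q k := by
  refine le_of_tendsto (tendsto_eulerLam hq0 hq1) ?_
  filter_upwards [Filter.eventually_ge_atTop k] with n hn
  exact eulerLam_antitone hq0 hq1 hn

lemma eulerLam_sub_le (hq0 : 0 < q) (hq1 : q < 1) (k n : ℕ) (hkn : k ≤ n) :
    eulerLam q k - eulerLam q n ≤ ∑ j ∈ Finset.Ico k n, q ^ (j + 1) := by
  induction n, hkn using Nat.le_induction with
  | base => simp
  | succ n hkn ih =>
    rw [Finset.sum_Ico_succ_top hkn, eulerLam_succ]
    have h1 := eulerLam_pos hq0 hq1 n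
    have h2 := eulerLam_le_one hq0 hq1 n
    have h3 := pow_pos hq0 (n + 1)
    nlinarith

lemma eulerLam_sub_kappa_le (hq0 : 0 < q) (hq1 : q < 1) (k : ℕ) :
    eulerLam q k - eulerKappa q ≤ q ^ (k + 1) / (1 - q) := by
  have hq1q : (0:ℝ) < 1 - q := by linarith
  refine le_of_tendsto (tendsto_const_nhds.sub (tendsto_eulerLam hq0 hq1)) ?_
  filter_upwards [Filter.eventually_ge_atTop k] with n hn
  refine (eulerLam_sub_le hq0 hq1 k n hn).trans ?_
  calc ∑ j ∈ Finset.Ico k n, q ^ (j + 1) = ∑ j ∈ Finset.Ico k n, q * q ^ j := by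
        simp [pow_succ, mul_comm]
    _ = q * ∑ j ∈ Finset.Ico k n, q ^ j := by rw [Finset.mul_sum]
    _ ≤ q * (q ^ k / (1 - q)) := by
        apply mul_le_mul_of_nonneg_left (geom_sum_Ico_le_of_lt_one hq0.le hq1) hq0.le
    _ = q ^ (k + 1) / (1 - q) := by rw [pow_succ]; ring

lemma summable_c (hq0 : 0 < q) (hq1 : q < 1) :
    Summable (fun k : ℕ => eulerLam q k - eulerKappa q) := by
  have hgeo : Summable fun k : ℕ => q ^ (k + 1) / (1 - q) := by
    have := (summable_geometric_of_lt_one hq0.le hq1).mul_left (q / (1 - q))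
    refine this.congr fun k => ?_
    rw [pow_succ]; ring
  exact hgeo.of_nonneg_of_le
    (fun k => sub_nonneg.2 (eulerKappa_le_eulerLam hq0 hq1 k))
    (fun k => eulerLam_sub_kappa_le hq0 hq1 k)

end Aux

/-- For all `0 < q < 1`, the series `Σ_{k=0}^∞ (λ_k(q) - κ(q))` converges, the offsets
`b_n(q)` converge as `n → ∞` with limit `b(q) = 2κ(q)·Σ_{k=0}^∞ (λ_k(q) - κ(q))`, and
this limit is strictly positive. -/
theorem postOffset_tendsto (q : ℝ) (hq0 : 0 < q) (hq1 : q < 1) :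
    Summable (fun k : ℕ => eulerLam q k - eulerKappa q) ∧
    Filter.Tendsto (fun n : ℕ => postOffset q n) Filter.atTop
      (nhds (2 * eulerKappa q * ∑' k : ℕ, (eulerLam q k - eulerKappa q))) ∧
    0 < 2 * eulerKappa q * ∑' k : ℕ, (eulerLam q k - eulerKappa q) := by
  set κ := eulerKappa q with hκ
  set c : ℕ → ℝ := fun k => eulerLam q k - κ with hc_def
  have hc : Summable c := summable_c hq0 hq1
  have hc0 : ∀ k, 0 ≤ c k := fun k => sub_nonneg.2 (eulerKappa_le_eulerLam hq0 hq1 k)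
  have hκpos : 0 < κ := eulerKappa_pos hq0 hq1
  refine ⟨hc, ?_, ?_⟩
  · -- convergence of postOffset
    have key : ∀ n : ℕ, postOffset q n =
        (∑ i ∈ Finset.range n, c i * c (n - 1 - i)) +
        2 * κ * (∑ i ∈ Finset.range n, c i) := by
      intro n
      have hIcc : ∑ k ∈ Finset.Icc 1 n, eulerLam q (k - 1) * eulerLam q (n - k)
          = ∑ i ∈ Finset.range n, eulerLam q i * eulerLam q (n - 1 - i) := by
        rw [← Finset.Ico_add_one_right_eq_Icc, Finset.sum_Ico_eq_sum_range]
        apply Finset.sum_congr rfl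
        intro i _
        congr 1
        · congr 1; omega
        · congr 1; omega
      have hrefl : ∑ i ∈ Finset.range n, c (n - 1 - i) = ∑ i ∈ Finset.range n, c i :=
        Finset.sum_range_reflect c n
      have hsplit : ∀ i : ℕ, eulerLam q i * eulerLam q (n - 1 - i) - κ ^ 2 =
          c i * c (n - 1 - i) + κ * c i + κ * c (n - 1 - i) := by
        intro i; simp only [hc_def]; ring
      unfold postOffset
      rw [hIcc]
      have hn : (n : ℝ) * κ ^ 2 = ∑ _i ∈ Finset.range n, κ ^ 2 := by
        rw [Finset.sum_const, Finset.card_range, nsmul_eq_mul]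
      rw [hn, ← Finset.sum_sub_distrib]
      rw [Finset.sum_congr rfl (fun i _ => hsplit i)]
      rw [Finset.sum_add_distrib, Finset.sum_add_distrib, ← Finset.mul_sum, ← Finset.mul_sum,
        hrefl]
      ring
    have habs : Summable fun k => ‖c k‖ := by
      refine hc.congr fun k => ?_
      rw [Real.norm_eq_abs, abs_of_nonneg (hc0 k)]
    have hd : Summable (fun m : ℕ => ∑ i ∈ Finset.range (m + 1), c i * c (m - i)) :=
      (summable_norm_sum_mul_range_of_summable_norm habs habs).of_norm
    have hT : Filter.Tendsto (fun n : ℕ => ∑ i ∈ Finset.range n, c i * c (n - 1 - i))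
        Filter.atTop (nhds 0) := by
      have h1 := hd.tendsto_atTop_zero.comp (Filter.tendsto_sub_atTop_nat 1)
      refine h1.congr' ?_
      filter_upwards [Filter.eventually_ge_atTop 1] with n hn
      simp only [Function.comp]
      have h2 : n - 1 + 1 = n := by omega
      rw [h2]
    have hA : Filter.Tendsto (fun n : ℕ => ∑ i ∈ Finset.range n, c i)
        Filter.atTop (nhds (∑' k, c k)) := hc.hasSum.tendsto_sum_nat
    have := hT.add (hA.const_mul (2 * κ))
    rw [zero_add] at this
    refine this.congr fun n => ?_
    rw [key n]
  · -- positivity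
    have hS : 0 < ∑' k, c k := by
      refine Summable.tsum_pos hc hc0 0 ?_
      have hκlt : κ < 1 := by
        have h1 : eulerLam q 1 = 1 - q := by
          simp [eulerLam]
        have := eulerKappa_le_eulerLam hq0 hq1 1
        rw [h1] at this
        linarith
      have h0 : eulerLam q 0 = 1 := by simp [eulerLam]
      simp only [hc_def, h0]
      linarith
    positivity
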